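/- Let Y = {a,b} with a < b and suppose there exists a social welfare order on Y^ℕ satisfying Upper Asymptotic Pareto and Anonymity. Then there exists a non-Ramsey set, i.e., a collection Γ of infinite subsets of ℕ such that for every infinite T ⊆ ℕ, the family of infinite subsets of T meets both Γ and its complement. -/

import Mathlib

open Filter Topology

noncomputable def upperDensity (S : Set ℕ) : ℝ :=
  Filter.limsup (fun n : ℕ => (Nat.card (↥(S ∩ Set.Icc 1 n)) : ℝ) / (n : ℝ)) Filter.atTop

namespace Stmt12

open scoped Classical

/-- The indicator stream: `b` on `P`, `a` elsewhere. -/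
noncomputable def chi (a b : ℝ) (P : Set ℕ) : ℕ → ℝ := fun n => if n ∈ P then b else a

lemma chi_mem {a b : ℝ} {P : Set ℕ} {n : ℕ} (h : n ∈ P) : chi a b P n = b := if_pos h

lemma chi_not_mem {a b : ℝ} {P : Set ℕ} {n : ℕ} (h : n ∉ P) : chi a b P n = a := if_neg h

lemma chi_congr {a b : ℝ} {P Q : Set ℕ} {n m : ℕ} (h : n ∈ P ↔ m ∈ Q) :
    chi a b P n = chi a b Q m := if_congr h rfl rfl

lemma chi_vals (a b : ℝ) (P : Set ℕ) : ∀ i, chi a b P i = a ∨ chi a b P i = b := by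
  intro i
  by_cases h : i ∈ P
  · exact Or.inr (chi_mem h)
  · exact Or.inl (chi_not_mem h)

lemma chi_le {a b : ℝ} (hab : a ≤ b) {P Q : Set ℕ} (h : Q ⊆ P) :
    ∀ i, chi a b Q i ≤ chi a b P i := by
  intro i
  by_cases hq : i ∈ Q
  · rw [chi_mem hq, chi_mem (h hq)]
  · rw [chi_not_mem hq]
    by_cases hp : i ∈ P
    · rw [chi_mem hp]; exact hab
    · rw [chi_not_mem hp]

lemma strictMono_range_eq {f g : ℕ → ℕ} (hf : StrictMono f) (hg : StrictMono g)
    (h : Set.range f = Set.range g) : f = g := by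
  have key : ∀ (f g : ℕ → ℕ), StrictMono f → StrictMono g → Set.range f = Set.range g →
      ∀ n, (∀ k, k < n → f k = g k) → g n ≤ f n := by
    intro f g hf hg h n ih
    have hmem : f n ∈ Set.range g := h ▸ Set.mem_range_self n
    obtain ⟨m, hm⟩ := hmem
    by_contra hc
    push_neg at hc
    have hmn : m < n := by
      by_contra hmn
      push_neg at hmn
      have : g n ≤ f n := hm ▸ hg.monotone hmn
      exact absurd this (not_le.mpr hc)
    have h1 : f m = g m := ih m hmn
    have h2 : f m = f n := by rw [h1, hm]
    have := hf.injective h2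
    omega
  funext n
  induction n using Nat.strong_induction_on with
  | _ n ih =>
    exact le_antisymm (key g f hg hf h.symm n fun k hk => (ih k hk).symm)
      (key f g hf hg h n ih)

lemma nth_range_eq (f : ℕ → ℕ) (hf : StrictMono f) :
    Nat.nth (· ∈ Set.range f) = f := by
  have hinf : (setOf (· ∈ Set.range f)).Infinite := by
    change (Set.range f).Infinite
    exact Set.infinite_range_of_injective hf.injective
  exact strictMono_range_eq (Nat.nth_strictMono hinf) hf
    (by rw [Nat.range_nth_of_infinite hinf, Set.setOf_mem_eq])

/-- The union of blocks `[a₀,a₁) ∪ [a₂,a₃) ∪ …` determined by the increasing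
enumeration of `A`. -/
noncomputable def Wset (A : Set ℕ) : Set ℕ :=
  {n | ∃ k, Nat.nth (· ∈ A) (2 * k) ≤ n ∧ n < Nat.nth (· ∈ A) (2 * k + 1)}

def pairSeq (s p q : ℕ → ℕ) : ℕ → ℕ := fun n =>
  if n % 2 = 0 then s (p (n / 2)) else s (q (n / 2))

lemma pairSeq_even (s p q : ℕ → ℕ) (k : ℕ) : pairSeq s p q (2 * k) = s (p k) := by
  have h1 : (2 * k) % 2 = 0 := by omega
  have h2 : (2 * k) / 2 = k := by omega
  simp [pairSeq, h1, h2]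

lemma pairSeq_odd (s p q : ℕ → ℕ) (k : ℕ) : pairSeq s p q (2 * k + 1) = s (q k) := by
  have h1 : ¬((2 * k + 1) % 2 = 0) := by omega
  have h2 : (2 * k + 1) / 2 = k := by omega
  simp [pairSeq, h1, h2]

lemma pairSeq_strictMono {s p q : ℕ → ℕ} (hs : StrictMono s)
    (h1 : ∀ k, p k < q k) (h2 : ∀ k, q k < p (k + 1)) : StrictMono (pairSeq s p q) := by
  apply strictMono_nat_of_lt_succ
  intro n
  unfold pairSeq
  by_cases hn : n % 2 = 0
  · rw [if_pos hn, if_neg (by omega)]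
    have he : (n + 1) / 2 = n / 2 := by omega
    rw [he]
    exact hs (h1 _)
  · rw [if_neg hn, if_pos (by omega)]
    have he : (n + 1) / 2 = n / 2 + 1 := by omega
    rw [he]
    exact hs (h2 _)

lemma Wset_pairSeq {s p q : ℕ → ℕ} (hs : StrictMono s)
    (h1 : ∀ k, p k < q k) (h2 : ∀ k, q k < p (k + 1)) :
    Wset (Set.range (pairSeq s p q)) = ⋃ k, Set.Ico (s (p k)) (s (q k)) := by
  have hmono := pairSeq_strictMono hs h1 h2
  unfold Wset
  rw [nth_range_eq _ hmono]
  ext n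
  simp only [Set.mem_setOf_eq, Set.mem_iUnion, Set.mem_Ico, pairSeq_even, pairSeq_odd]

/-- A set containing full blocks `[s m, s (m+1))` for arbitrarily large `m`
(with doubling growth) has positive upper density. -/
lemma dens (s : ℕ → ℕ) (hg : ∀ k, 2 * s k + 2 ≤ s (k + 1)) (D : Set ℕ)
    (hD : ∀ k, ∃ m, k ≤ m ∧ Set.Ico (s m) (s (m + 1)) ⊆ D) : 0 < upperDensity D := by
  have hle : ∀ m, m ≤ s m := by
    intro m
    induction m with
    | zero => exact Nat.zero_le _
    | succ m ih => have := hg m; omega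
  have hbound : ∀ n : ℕ, (Nat.card ↥(D ∩ Set.Icc 1 n) : ℝ) / (n : ℝ) ≤ 1 := by
    intro n
    rcases Nat.eq_zero_or_pos n with rfl | h0
    · norm_num
    · rw [div_le_one (by exact_mod_cast h0)]
      have hfin : (Set.Icc 1 n).Finite := Set.finite_Icc _ _
      have h1 : (D ∩ Set.Icc 1 n).ncard ≤ (Set.Icc 1 n).ncard :=
        Set.ncard_le_ncard Set.inter_subset_right hfin
      have h2 : (Set.Icc 1 n).ncard = n := by
        rw [← Finset.coe_Icc, Set.ncard_coe_finset, Nat.card_Icc]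
        omega
      rw [Nat.card_coe_set_eq]
      exact_mod_cast h1.trans_eq h2
  have hmain : (1 : ℝ) / 2 ≤ upperDensity D := by
    unfold upperDensity
    apply Filter.le_limsup_of_frequently_le ?_ (Filter.isBoundedUnder_of ⟨1, hbound⟩)
    rw [Filter.frequently_atTop]
    intro N
    obtain ⟨m, hmN, hblock⟩ := hD (N + 1)
    have hgm := hg m
    have hlem := hle (m + 1)
    have hlem' := hle m
    refine ⟨s (m + 1) - 1, by omega, ?_⟩
    set n := s (m + 1) - 1 with hndef
    have hn1 : n + 1 = s (m + 1) := by omega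
    have hsm1 : 1 ≤ s m := by omega
    have hsub2 : Set.Icc (s m) n ⊆ D ∩ Set.Icc 1 n := by
      intro x hx
      rw [Set.mem_Icc] at hx
      exact ⟨hblock (by rw [Set.mem_Ico]; omega), by rw [Set.mem_Icc]; omega⟩
    have hfin : (D ∩ Set.Icc 1 n).Finite :=
      (Set.finite_Icc 1 n).subset Set.inter_subset_right
    have hcard : n + 1 - s m ≤ (D ∩ Set.Icc 1 n).ncard := by
      have h1 := Set.ncard_le_ncard hsub2 hfin
      have h2 : (Set.Icc (s m) n).ncard = n + 1 - s m := by
        rw [← Finset.coe_Icc, Set.ncard_coe_finset, Nat.card_Icc]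
      omega
    rw [Nat.card_coe_set_eq]
    have hnpos : (0 : ℝ) < (n : ℝ) := by
      have : 0 < n := by omega
      exact_mod_cast this
    rw [div_le_div_iff₀ (by norm_num) hnpos]
    have hfin2 : n ≤ (D ∩ Set.Icc 1 n).ncard * 2 := by omega
    calc (1 : ℝ) * n = (n : ℝ) := one_mul _
      _ ≤ (((D ∩ Set.Icc 1 n).ncard * 2 : ℕ) : ℝ) := by exact_mod_cast hfin2
      _ = ((D ∩ Set.Icc 1 n).ncard : ℝ) * 2 := by push_cast; ring
  linarith

/-- Anonymity (finitely many swaps): the indicator of `[0,c) ∪ M` is indifferent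
to that of `[u,u+c) ∪ M`. -/
lemma anon_move (a b : ℝ) (R : (ℕ → ℝ) → (ℕ → ℝ) → Prop)
    (htotal : ∀ x y : ℕ → ℝ, (∀ i, x i = a ∨ x i = b) → (∀ i, y i = a ∨ y i = b) →
      (R x y ∨ R y x))
    (htrans : ∀ x y z : ℕ → ℝ, (∀ i, x i = a ∨ x i = b) → (∀ i, y i = a ∨ y i = b) →
      (∀ i, z i = a ∨ z i = b) → R x y → R y z → R x z)
    (hAN : ∀ x : ℕ → ℝ, (∀ i, x i = a ∨ x i = b) → ∀ i j : ℕ,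
      R x (x ∘ Equiv.swap i j) ∧ R (x ∘ Equiv.swap i j) x)
    (c u : ℕ) (hcu : c ≤ u) (M : Set ℕ)
    (hM1 : ∀ i, i < c → i ∉ M) (hM2 : ∀ i, u ≤ i → i < u + c → i ∉ M) :
    R (chi a b (Set.Ico 0 c ∪ M)) (chi a b (Set.Ico u (u + c) ∪ M)) ∧
      R (chi a b (Set.Ico u (u + c) ∪ M)) (chi a b (Set.Ico 0 c ∪ M)) := by
  have hrefl : ∀ P : Set ℕ, R (chi a b P) (chi a b P) := by
    intro P
    rcases htotal _ _ (chi_vals a b P) (chi_vals a b P) with h | h <;> exact h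
  set X : ℕ → Set ℕ := fun j => (Set.Ico j c ∪ Set.Ico u (u + j)) ∪ M with hX
  have key : ∀ j, j ≤ c →
      R (chi a b (X 0)) (chi a b (X j)) ∧ R (chi a b (X j)) (chi a b (X 0)) := by
    intro j
    induction j with
    | zero => intro _; exact ⟨hrefl _, hrefl _⟩
    | succ j ih =>
      intro hj
      have hjc : j < c := hj
      obtain ⟨ih1, ih2⟩ := ih (by omega)
      have hswap : chi a b (X (j + 1)) = chi a b (X j) ∘ (Equiv.swap j (u + j)) := by
        funext n
        have hmem1 : u + j ∉ X j := by
          rw [hX]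
          simp only [Set.mem_union, Set.mem_Ico]
          push_neg
          exact ⟨⟨fun _ => by omega, fun _ => by omega⟩, hM2 _ (by omega) (by omega)⟩
        have hmem2 : j ∉ X (j + 1) := by
          rw [hX]
          simp only [Set.mem_union, Set.mem_Ico]
          push_neg
          exact ⟨⟨fun h => by omega, fun h => by omega⟩, hM1 _ hjc⟩
        have hmem3 : j ∈ X j := by
          rw [hX]
          simp only [Set.mem_union, Set.mem_Ico]
          exact Or.inl (Or.inl ⟨le_refl _, hjc⟩)
        have hmem4 : u + j ∈ X (j + 1) := by
          rw [hX]
          simp only [Set.mem_union, Set.mem_Ico]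
          exact Or.inl (Or.inr ⟨by omega, by omega⟩)
        rcases eq_or_ne n j with rfl | hn1
        · rw [Function.comp_apply, Equiv.swap_apply_left, chi_not_mem hmem2,
            chi_not_mem hmem1]
        · rcases eq_or_ne n (u + j) with rfl | hn2
          · rw [Function.comp_apply, Equiv.swap_apply_right, chi_mem hmem4, chi_mem hmem3]
          · rw [Function.comp_apply, Equiv.swap_apply_of_ne_of_ne hn1 hn2]
            have harith : ((j + 1 ≤ n ∧ n < c) ∨ (u ≤ n ∧ n < u + (j + 1))) ↔
                ((j ≤ n ∧ n < c) ∨ (u ≤ n ∧ n < u + j)) := by omega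
            have h5 : n ∈ X (j + 1) ↔ n ∈ X j := by
              rw [hX]
              simp only [Set.mem_union, Set.mem_Ico]
              rw [harith]
            exact chi_congr h5
      obtain ⟨ha1, ha2⟩ := hAN (chi a b (X j)) (chi_vals a b _) j (u + j)
      rw [← hswap] at ha1 ha2
      exact ⟨htrans _ _ _ (chi_vals a b _) (chi_vals a b _) (chi_vals a b _) ih1 ha1,
        htrans _ _ _ (chi_vals a b _) (chi_vals a b _) (chi_vals a b _) ha2 ih2⟩
  have e0 : X 0 = Set.Ico 0 c ∪ M := by
    rw [hX]
    simp
  have ec : X c = Set.Ico u (u + c) ∪ M := by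
    rw [hX]
    simp
  obtain ⟨k1, k2⟩ := key c (le_refl c)
  rw [e0, ec] at k1 k2
  exact ⟨k1, k2⟩

end Stmt12

open Stmt12

/-- if there is a social welfare order (complete and transitive
relation) on {a,b}^ℕ (a < b) satisfying Upper Asymptotic Pareto and Anonymity,
then there exists a non-Ramsey collection of infinite subsets of ℕ. -/
theorem stmt_12 (a b : ℝ) (hab : a < b)
    (R : (ℕ → ℝ) → (ℕ → ℝ) → Prop)
    (htotal : ∀ x y : ℕ → ℝ, (∀ i, x i = a ∨ x i = b) → (∀ i, y i = a ∨ y i = b) →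
      (R x y ∨ R y x))
    (htrans : ∀ x y z : ℕ → ℝ, (∀ i, x i = a ∨ x i = b) → (∀ i, y i = a ∨ y i = b) →
      (∀ i, z i = a ∨ z i = b) → R x y → R y z → R x z)
    (hAN : ∀ x : ℕ → ℝ, (∀ i, x i = a ∨ x i = b) → ∀ i j : ℕ,
      R x (x ∘ Equiv.swap i j) ∧ R (x ∘ Equiv.swap i j) x)
    (hUAP : ∀ x y : ℕ → ℝ, (∀ i, x i = a ∨ x i = b) → (∀ i, y i = a ∨ y i = b) →
      (∀ i, y i ≤ x i) →
      ∀ S : Set ℕ, 0 < upperDensity S → (∀ i ∈ S, y i < x i) → (R x y ∧ ¬ R y x)) :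
    ∃ Γ : Set (Set ℕ), (∀ A ∈ Γ, A.Infinite) ∧
      ∀ T : Set ℕ, T.Infinite →
        (∃ S ⊆ T, S.Infinite ∧ S ∈ Γ) ∧ (∃ S ⊆ T, S.Infinite ∧ S ∉ Γ) := by
  classical
  refine ⟨{A : Set ℕ | A.Infinite ∧ R (chi a b (Wset A)) (chi a b (Wset A)ᶜ) ∧
      ¬ R (chi a b (Wset A)ᶜ) (chi a b (Wset A))}, fun A hA => hA.1, ?_⟩
  intro T hT
  have htinf : (setOf (· ∈ T)).Infinite := by change T.Infinite; exact hT
  obtain ⟨t, htsm, htmem⟩ : ∃ t : ℕ → ℕ, StrictMono t ∧ ∀ m, t m ∈ T :=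
    ⟨Nat.nth (· ∈ T), Nat.nth_strictMono htinf, fun m => Nat.nth_mem_of_infinite htinf m⟩
  have htle : ∀ m, m ≤ t m := by
    intro m
    induction m with
    | zero => exact Nat.zero_le _
    | succ m ih => exact Nat.succ_le_of_lt (lt_of_le_of_lt ih (htsm (Nat.lt_succ_self m)))
  obtain ⟨s, hs0, hsS⟩ : ∃ s : ℕ → ℕ, s 0 = t 0 ∧ ∀ k, s (k + 1) = t (2 * s k + 2) :=
    ⟨fun k => Nat.rec (t 0) (fun _ prev => t (2 * prev + 2)) k, rfl, fun _ => rfl⟩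
  have hsT : ∀ k, s k ∈ T := by
    intro k
    cases k with
    | zero => rw [hs0]; exact htmem 0
    | succ k => rw [hsS]; exact htmem _
  have hgrow : ∀ k, 2 * s k + 2 ≤ s (k + 1) := by
    intro k
    rw [hsS]
    exact htle _
  have hsm : StrictMono s := strictMono_nat_of_lt_succ fun k => by have := hgrow k; omega
  have hmono : Monotone s := hsm.monotone
  -- block uniqueness
  have hbu' : ∀ m e m' e' n : ℕ, e = m + 1 → e' = m' + 1 → s m ≤ n → n < s e →
      s m' ≤ n → n < s e' → m = m' := by
    intro m e m' e' n he he' h1 h2 h3 h4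
    subst he he'
    by_contra hne
    rcases Nat.lt_or_ge m m' with h | h
    · have : s (m + 1) ≤ n := le_trans (hmono (by omega)) h3
      omega
    · have : s (m' + 1) ≤ n := le_trans (hmono (by omega)) h1
      omega
  -- decomposition into unit blocks
  have hIco : ∀ j i n : ℕ, s i ≤ n → n < s j →
      ∃ m, i ≤ m ∧ m + 1 ≤ j ∧ s m ≤ n ∧ n < s (m + 1) := by
    intro j
    induction j with
    | zero =>
      intro i n h1 h2
      exact absurd (lt_of_le_of_lt h1 h2) (not_lt.mpr (hmono (Nat.zero_le i)))
    | succ j ih =>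
      intro i n h1 h2
      by_cases hc : n < s j
      · obtain ⟨m, hm1, hm2, hm3, hm4⟩ := ih i n h1 hc
        exact ⟨m, hm1, by omega, hm3, hm4⟩
      · have hij : i ≤ j := by
          by_contra hij
          exact absurd (le_trans (hmono (show j + 1 ≤ i by omega)) h1) (not_le.mpr h2)
        exact ⟨j, hij, le_refl _, not_lt.mp hc, h2⟩
  -- covering
  have hcov : ∀ n, n < s 0 ∨ ∃ m, s m ≤ n ∧ n < s (m + 1) := by
    intro n
    induction n with
    | zero =>
      by_cases h : 0 < s 0
      · exact Or.inl h
      · right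
        refine ⟨0, by omega, ?_⟩
        have := hsm (show (0 : ℕ) < 0 + 1 by omega)
        omega
    | succ n ih =>
      rcases ih with h | ⟨m, h1, h2⟩
      · by_cases h' : n + 1 < s 0
        · exact Or.inl h'
        · right
          refine ⟨0, by omega, ?_⟩
          have := hsm (show (0 : ℕ) < 0 + 1 by omega)
          omega
      · by_cases h' : n + 1 < s (m + 1)
        · exact Or.inr ⟨m, by omega, h'⟩
        · right
          refine ⟨m + 1, by omega, ?_⟩
          have := hsm (show m + 1 < m + 1 + 1 by omega)
          omega
  -- builder for subsets of T with prescribed block structure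
  have hbuild : ∀ p q : ℕ → ℕ, (∀ k, p k < q k) → (∀ k, q k < p (k + 1)) →
      ∃ A : Set ℕ, A ⊆ T ∧ A.Infinite ∧ Wset A = ⋃ k, Set.Ico (s (p k)) (s (q k)) := by
    intro p q h1 h2
    refine ⟨Set.range (pairSeq s p q), ?_, ?_, Wset_pairSeq hsm h1 h2⟩
    · rintro x ⟨n, rfl⟩
      unfold pairSeq
      split <;> exact hsT _
    · exact Set.infinite_range_of_injective (pairSeq_strictMono hsm h1 h2).injective
  have hvals : ∀ P : Set ℕ, ∀ i, chi a b P i = a ∨ chi a b P i = b := chi_vals a b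
  have Rtrans : ∀ P Q S : Set ℕ, R (chi a b P) (chi a b Q) → R (chi a b Q) (chi a b S) →
      R (chi a b P) (chi a b S) :=
    fun P Q S hx hy => htrans _ _ _ (hvals P) (hvals Q) (hvals S) hx hy
  have Ruap : ∀ P Q : Set ℕ, Q ⊆ P → 0 < upperDensity (P \ Q) →
      R (chi a b P) (chi a b Q) ∧ ¬ R (chi a b Q) (chi a b P) := by
    intro P Q hsub hd
    refine hUAP _ _ (hvals P) (hvals Q) (chi_le hab.le hsub) (P \ Q) hd ?_
    intro i hi
    rw [chi_not_mem hi.2, chi_mem hi.1]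
    exact hab
  have hdens : ∀ D : Set ℕ, (∀ k, ∃ m, k ≤ m ∧ Set.Ico (s m) (s (m + 1)) ⊆ D) →
      0 < upperDensity D := dens s hgrow
  constructor
  · -- there is an infinite subset of T in Γ; otherwise "all-out" cycle
    by_contra hcon
    push_neg at hcon
    obtain ⟨A3, hA3T, hA3inf, hWA3⟩ := hbuild (fun k => 4 * k + 1) (fun k => 4 * k + 4)
      (fun k => (by omega : 4 * k + 1 < 4 * k + 4))
      (fun k => (by omega : 4 * k + 4 < 4 * (k + 1) + 1))
    obtain ⟨A4, hA4T, hA4inf, hWA4⟩ := hbuild (fun k => 4 * k + 3) (fun k => 4 * k + 6)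
      (fun k => (by omega : 4 * k + 3 < 4 * k + 6))
      (fun k => (by omega : 4 * k + 6 < 4 * (k + 1) + 3))
    have hWP : Wset A3 = ⋃ k, Set.Ico (s (4 * k + 1)) (s (4 * k + 4)) := hWA3
    have hWQ : Wset A4 = ⋃ k, Set.Ico (s (4 * k + 3)) (s (4 * k + 6)) := hWA4
    set P : Set ℕ := ⋃ k, Set.Ico (s (4 * k + 1)) (s (4 * k + 4)) with hPdef
    set Q : Set ℕ := ⋃ k, Set.Ico (s (4 * k + 3)) (s (4 * k + 6)) with hQdef
    set MP : Set ℕ := ⋃ k, Set.Ico (s (4 * k + 4)) (s (4 * k + 5)) with hMPdef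
    set MQ : Set ℕ := ⋃ k, Set.Ico (s (4 * k + 6)) (s (4 * k + 7)) with hMQdef
    have hkey78 : s 7 + s 1 ≤ s 8 := by
      have h8 := hgrow 7
      norm_num at h8
      have h17 : s 1 ≤ s 7 := hmono (by omega)
      omega
    have hkey910 : s 9 + s 3 ≤ s 10 := by
      have h10 := hgrow 9
      norm_num at h10
      have h39 : s 3 ≤ s 9 := hmono (by omega)
      omega
    have hmemP : ∀ n, n ∈ P ↔ ∃ m, (∃ k, m = 4 * k + 1 ∨ m = 4 * k + 2 ∨ m = 4 * k + 3) ∧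
        s m ≤ n ∧ n < s (m + 1) := by
      intro n
      rw [hPdef]
      simp only [Set.mem_iUnion, Set.mem_Ico]
      constructor
      · rintro ⟨k, h1, h2⟩
        obtain ⟨m, hm1, hm2, hm3, hm4⟩ := hIco (4 * k + 4) (4 * k + 1) n h1 h2
        exact ⟨m, ⟨k, by omega⟩, hm3, hm4⟩
      · rintro ⟨m, ⟨k, hk⟩, h1, h2⟩
        refine ⟨k, le_trans (hmono (by omega)) h1, lt_of_lt_of_le h2 (hmono (by omega))⟩
    have hmemQ : ∀ n, n ∈ Q ↔ ∃ m, (∃ k, m = 4 * k + 3 ∨ m = 4 * k + 4 ∨ m = 4 * k + 5) ∧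
        s m ≤ n ∧ n < s (m + 1) := by
      intro n
      rw [hQdef]
      simp only [Set.mem_iUnion, Set.mem_Ico]
      constructor
      · rintro ⟨k, h1, h2⟩
        obtain ⟨m, hm1, hm2, hm3, hm4⟩ := hIco (4 * k + 6) (4 * k + 3) n h1 h2
        exact ⟨m, ⟨k, by omega⟩, hm3, hm4⟩
      · rintro ⟨m, ⟨k, hk⟩, h1, h2⟩
        refine ⟨k, le_trans (hmono (by omega)) h1, lt_of_lt_of_le h2 (hmono (by omega))⟩
    -- complement identities
    have hPc : Pᶜ = Set.Ico 0 (s 1) ∪ MP := by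
      ext n
      simp only [Set.mem_compl_iff, Set.mem_union, Set.mem_Ico]
      constructor
      · intro hnP
        rcases hcov n with h | ⟨m, h1, h2⟩
        · exact Or.inl ⟨Nat.zero_le _, lt_of_lt_of_le h (hmono (by omega))⟩
        · obtain ⟨k, hk⟩ : ∃ k, m = 0 ∨ m = 4 * k + 1 ∨ m = 4 * k + 2 ∨ m = 4 * k + 3 ∨
              m = 4 * k + 4 := ⟨(m - 1) / 4, by omega⟩
          rcases hk with hk | hk | hk | hk | hk
          · subst hk
            exact Or.inl ⟨Nat.zero_le _, lt_of_lt_of_le h2 (hmono (by omega))⟩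
          · exact absurd ((hmemP n).mpr ⟨m, ⟨k, Or.inl hk⟩, h1, h2⟩) hnP
          · exact absurd ((hmemP n).mpr ⟨m, ⟨k, Or.inr (Or.inl hk)⟩, h1, h2⟩) hnP
          · exact absurd ((hmemP n).mpr ⟨m, ⟨k, Or.inr (Or.inr hk)⟩, h1, h2⟩) hnP
          · right
            rw [hMPdef]
            simp only [Set.mem_iUnion, Set.mem_Ico]
            subst hk
            exact ⟨k, h1, lt_of_lt_of_le h2 (hmono (by omega))⟩
      · rintro (⟨-, h⟩ | h)
        · intro hnP
          obtain ⟨m, ⟨k, hk⟩, h1, h2⟩ := (hmemP n).mp hnP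
          have := le_trans (hmono (show 1 ≤ m by omega)) h1
          omega
        · intro hnP
          rw [hMPdef] at h
          simp only [Set.mem_iUnion, Set.mem_Ico] at h
          obtain ⟨k, hq1, hq2⟩ := h
          obtain ⟨m, ⟨k', hk'⟩, h1, h2⟩ := (hmemP n).mp hnP
          have := hbu' (4 * k + 4) (4 * k + 5) m (m + 1) n (by omega) rfl hq1 hq2 h1 h2
          omega
    have hQc : Qᶜ = Set.Ico 0 (s 3) ∪ MQ := by
      ext n
      simp only [Set.mem_compl_iff, Set.mem_union, Set.mem_Ico]
      constructor
      · intro hnQ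
        rcases hcov n with h | ⟨m, h1, h2⟩
        · exact Or.inl ⟨Nat.zero_le _, lt_of_lt_of_le h (hmono (by omega))⟩
        · obtain ⟨k, hk⟩ : ∃ k, m < 3 ∨ m = 4 * k + 3 ∨ m = 4 * k + 4 ∨ m = 4 * k + 5 ∨
              m = 4 * k + 6 := ⟨(m - 3) / 4, by omega⟩
          rcases hk with hk | hk | hk | hk | hk
          · exact Or.inl ⟨Nat.zero_le _, lt_of_lt_of_le h2 (hmono (by omega))⟩
          · exact absurd ((hmemQ n).mpr ⟨m, ⟨k, Or.inl hk⟩, h1, h2⟩) hnQ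
          · exact absurd ((hmemQ n).mpr ⟨m, ⟨k, Or.inr (Or.inl hk)⟩, h1, h2⟩) hnQ
          · exact absurd ((hmemQ n).mpr ⟨m, ⟨k, Or.inr (Or.inr hk)⟩, h1, h2⟩) hnQ
          · right
            rw [hMQdef]
            simp only [Set.mem_iUnion, Set.mem_Ico]
            subst hk
            exact ⟨k, h1, lt_of_lt_of_le h2 (hmono (by omega))⟩
      · rintro (⟨-, h⟩ | h)
        · intro hnQ
          obtain ⟨m, ⟨k, hk⟩, h1, h2⟩ := (hmemQ n).mp hnQ
          have := le_trans (hmono (show 3 ≤ m by omega)) h1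
          omega
        · intro hnQ
          rw [hMQdef] at h
          simp only [Set.mem_iUnion, Set.mem_Ico] at h
          obtain ⟨k, hq1, hq2⟩ := h
          obtain ⟨m, ⟨k', hk'⟩, h1, h2⟩ := (hmemQ n).mp hnQ
          have := hbu' (4 * k + 6) (4 * k + 7) m (m + 1) n (by omega) rfl hq1 hq2 h1 h2
          omega
    -- subset facts
    have hVPQ : Set.Ico (s 7) (s 7 + s 1) ∪ MP ⊆ Q := by
      intro n hn
      rw [hQdef]
      simp only [Set.mem_iUnion, Set.mem_Ico]
      rcases hn with hn | hn
      · rw [Set.mem_Ico] at hn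
        refine ⟨1, le_trans (hmono (by omega : 4 * 1 + 3 ≤ 7)) hn.1, ?_⟩
        exact lt_of_lt_of_le hn.2 (le_trans hkey78 (hmono (by omega : 8 ≤ 4 * 1 + 6)))
      · rw [hMPdef] at hn
        simp only [Set.mem_iUnion, Set.mem_Ico] at hn
        obtain ⟨k, h1, h2⟩ := hn
        exact ⟨k, le_trans (hmono (by omega)) h1, lt_of_lt_of_le h2 (hmono (by omega))⟩
    have hVQP : Set.Ico (s 9) (s 9 + s 3) ∪ MQ ⊆ P := by
      intro n hn
      rw [hPdef]
      simp only [Set.mem_iUnion, Set.mem_Ico]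
      rcases hn with hn | hn
      · rw [Set.mem_Ico] at hn
        refine ⟨2, le_trans (hmono (by omega : 4 * 2 + 1 ≤ 9)) hn.1, ?_⟩
        exact lt_of_lt_of_le hn.2 (le_trans hkey910 (hmono (by omega : 10 ≤ 4 * 2 + 4)))
      · rw [hMQdef] at hn
        simp only [Set.mem_iUnion, Set.mem_Ico] at hn
        obtain ⟨k, h1, h2⟩ := hn
        exact ⟨k + 1, le_trans (hmono (by omega)) h1, lt_of_lt_of_le h2 (hmono (by omega))⟩
    -- density facts
    have hdQVP : 0 < upperDensity (Q \ (Set.Ico (s 7) (s 7 + s 1) ∪ MP)) := by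
      apply hdens
      intro k
      refine ⟨4 * k + 9, by omega, ?_⟩
      intro n hn
      rw [Set.mem_Ico] at hn
      refine ⟨?_, ?_⟩
      · rw [hQdef]
        simp only [Set.mem_iUnion, Set.mem_Ico]
        exact ⟨k + 1, le_trans (hmono (by omega : 4 * (k + 1) + 3 ≤ 4 * k + 9)) hn.1,
          lt_of_lt_of_le hn.2 (hmono (by omega : 4 * k + 9 + 1 ≤ 4 * (k + 1) + 6))⟩
      · rintro (hm | hm)
        · rw [Set.mem_Ico] at hm
          have h8 : s 8 ≤ s (4 * k + 9) := hmono (by omega)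
          omega
        · rw [hMPdef] at hm
          simp only [Set.mem_iUnion, Set.mem_Ico] at hm
          obtain ⟨k', h1, h2⟩ := hm
          have := hbu' (4 * k' + 4) (4 * k' + 5) (4 * k + 9) (4 * k + 9 + 1) n (by omega) rfl
            h1 h2 hn.1 hn.2
          omega
    have hdPVQ : 0 < upperDensity (P \ (Set.Ico (s 9) (s 9 + s 3) ∪ MQ)) := by
      apply hdens
      intro k
      refine ⟨4 * k + 11, by omega, ?_⟩
      intro n hn
      rw [Set.mem_Ico] at hn
      refine ⟨?_, ?_⟩
      · rw [hPdef]
        simp only [Set.mem_iUnion, Set.mem_Ico]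
        exact ⟨k + 2, le_trans (hmono (by omega : 4 * (k + 2) + 1 ≤ 4 * k + 11)) hn.1,
          lt_of_lt_of_le hn.2 (hmono (by omega : 4 * k + 11 + 1 ≤ 4 * (k + 2) + 4))⟩
      · rintro (hm | hm)
        · rw [Set.mem_Ico] at hm
          have h10 : s 10 ≤ s (4 * k + 11) := hmono (by omega)
          omega
        · rw [hMQdef] at hm
          simp only [Set.mem_iUnion, Set.mem_Ico] at hm
          obtain ⟨k', h1, h2⟩ := hm
          have := hbu' (4 * k' + 6) (4 * k' + 7) (4 * k + 11) (4 * k + 11 + 1) n (by omega) rfl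
            h1 h2 hn.1 hn.2
          omega
    -- Γ-negation facts
    have h3 := hcon A3 hA3T hA3inf
    simp only [Set.mem_setOf_eq] at h3
    rw [hWP] at h3
    have hRP : R (chi a b Pᶜ) (chi a b P) := by
      rcases htotal _ _ (hvals P) (hvals Pᶜ) with h | h
      · by_contra hc
        exact h3 ⟨hA3inf, h, hc⟩
      · exact h
    have h4 := hcon A4 hA4T hA4inf
    simp only [Set.mem_setOf_eq] at h4
    rw [hWQ] at h4
    have hRQ : R (chi a b Qᶜ) (chi a b Q) := by
      rcases htotal _ _ (hvals Q) (hvals Qᶜ) with h | h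
      · by_contra hc
        exact h4 ⟨hA4inf, h, hc⟩
      · exact h
    -- anonymity facts
    have hM1P : ∀ i, i < s 1 → i ∉ MP := by
      intro i hi hm
      rw [hMPdef] at hm
      simp only [Set.mem_iUnion, Set.mem_Ico] at hm
      obtain ⟨k, h1, h2⟩ := hm
      have : s 1 ≤ s (4 * k + 4) := hmono (by omega)
      omega
    have hM2P : ∀ i, s 7 ≤ i → i < s 7 + s 1 → i ∉ MP := by
      intro i hi1 hi2 hm
      rw [hMPdef] at hm
      simp only [Set.mem_iUnion, Set.mem_Ico] at hm
      obtain ⟨k, h1, h2⟩ := hm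
      have h8 : i < s 8 := lt_of_lt_of_le hi2 hkey78
      have := hbu' (4 * k + 4) (4 * k + 5) 7 8 i (by omega) (by omega) h1 h2 hi1 h8
      omega
    have hM1Q : ∀ i, i < s 3 → i ∉ MQ := by
      intro i hi hm
      rw [hMQdef] at hm
      simp only [Set.mem_iUnion, Set.mem_Ico] at hm
      obtain ⟨k, h1, h2⟩ := hm
      have : s 3 ≤ s (4 * k + 6) := hmono (by omega)
      omega
    have hM2Q : ∀ i, s 9 ≤ i → i < s 9 + s 3 → i ∉ MQ := by
      intro i hi1 hi2 hm
      rw [hMQdef] at hm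
      simp only [Set.mem_iUnion, Set.mem_Ico] at hm
      obtain ⟨k, h1, h2⟩ := hm
      have h10 : i < s 10 := lt_of_lt_of_le hi2 hkey910
      have := hbu' (4 * k + 6) (4 * k + 7) 9 10 i (by omega) (by omega) h1 h2 hi1 h10
      omega
    have hanP := anon_move a b R htotal htrans hAN (s 1) (s 7) (hmono (by omega)) MP hM1P hM2P
    have hanQ := anon_move a b R htotal htrans hAN (s 3) (s 9) (hmono (by omega)) MQ hM1Q hM2Q
    have hR_VP_Pc : R (chi a b (Set.Ico (s 7) (s 7 + s 1) ∪ MP)) (chi a b Pᶜ) := by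
      rw [hPc]
      exact hanP.2
    have hR_VQ_Qc : R (chi a b (Set.Ico (s 9) (s 9 + s 3) ∪ MQ)) (chi a b Qᶜ) := by
      rw [hQc]
      exact hanQ.2
    -- UAP facts and the cycle
    have hu3 := Ruap Q (Set.Ico (s 7) (s 7 + s 1) ∪ MP) hVPQ hdQVP
    have hu4 := Ruap P (Set.Ico (s 9) (s 9 + s 3) ∪ MQ) hVQP hdPVQ
    have c1 : R (chi a b (Set.Ico (s 7) (s 7 + s 1) ∪ MP)) (chi a b P) :=
      Rtrans _ _ _ hR_VP_Pc hRP
    have c2 : R (chi a b (Set.Ico (s 7) (s 7 + s 1) ∪ MP))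
        (chi a b (Set.Ico (s 9) (s 9 + s 3) ∪ MQ)) := Rtrans _ _ _ c1 hu4.1
    have c3 : R (chi a b (Set.Ico (s 7) (s 7 + s 1) ∪ MP)) (chi a b Qᶜ) :=
      Rtrans _ _ _ c2 hR_VQ_Qc
    have c4 : R (chi a b (Set.Ico (s 7) (s 7 + s 1) ∪ MP)) (chi a b Q) :=
      Rtrans _ _ _ c3 hRQ
    exact hu3.2 c4
  · -- there is an infinite subset of T outside Γ; otherwise "all-in" cycle
    by_contra hcon
    push_neg at hcon
    obtain ⟨A1, hA1T, hA1inf, hWA1⟩ := hbuild (fun k => 4 * k + 1) (fun k => 4 * k + 2)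
      (fun k => (by omega : 4 * k + 1 < 4 * k + 2))
      (fun k => (by omega : 4 * k + 2 < 4 * (k + 1) + 1))
    obtain ⟨A2, hA2T, hA2inf, hWA2⟩ := hbuild (fun k => 4 * k + 3) (fun k => 4 * k + 4)
      (fun k => (by omega : 4 * k + 3 < 4 * k + 4))
      (fun k => (by omega : 4 * k + 4 < 4 * (k + 1) + 3))
    have hWP1 : Wset A1 = ⋃ k, Set.Ico (s (4 * k + 1)) (s (4 * k + 2)) := hWA1
    have hWQ1 : Wset A2 = ⋃ k, Set.Ico (s (4 * k + 3)) (s (4 * k + 4)) := hWA2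
    set P1 : Set ℕ := ⋃ k, Set.Ico (s (4 * k + 1)) (s (4 * k + 2)) with hP1def
    set Q1 : Set ℕ := ⋃ k, Set.Ico (s (4 * k + 3)) (s (4 * k + 4)) with hQ1def
    have hsub1 : Q1 ⊆ P1ᶜ := by
      intro n hn hP
      rw [hQ1def] at hn
      rw [hP1def] at hP
      simp only [Set.mem_iUnion, Set.mem_Ico] at hn hP
      obtain ⟨k, hk1, hk2⟩ := hn
      obtain ⟨k', hl1, hl2⟩ := hP
      have := hbu' (4 * k + 3) (4 * k + 4) (4 * k' + 1) (4 * k' + 2) n (by omega) (by omega)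
        hk1 hk2 hl1 hl2
      omega
    have hsub2 : P1 ⊆ Q1ᶜ := by
      intro n hn hQ
      rw [hP1def] at hn
      rw [hQ1def] at hQ
      simp only [Set.mem_iUnion, Set.mem_Ico] at hn hQ
      obtain ⟨k, hk1, hk2⟩ := hn
      obtain ⟨k', hl1, hl2⟩ := hQ
      have := hbu' (4 * k + 1) (4 * k + 2) (4 * k' + 3) (4 * k' + 4) n (by omega) (by omega)
        hk1 hk2 hl1 hl2
      omega
    have hd1 : 0 < upperDensity (P1ᶜ \ Q1) := by
      apply hdens
      intro k
      refine ⟨4 * k + 2, by omega, ?_⟩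
      intro n hn
      rw [Set.mem_Ico] at hn
      refine ⟨fun hP => ?_, fun hQ => ?_⟩
      · rw [hP1def] at hP
        simp only [Set.mem_iUnion, Set.mem_Ico] at hP
        obtain ⟨k', h1, h2⟩ := hP
        have := hbu' (4 * k + 2) (4 * k + 2 + 1) (4 * k' + 1) (4 * k' + 2) n rfl (by omega)
          hn.1 hn.2 h1 h2
        omega
      · rw [hQ1def] at hQ
        simp only [Set.mem_iUnion, Set.mem_Ico] at hQ
        obtain ⟨k', h1, h2⟩ := hQ
        have := hbu' (4 * k + 2) (4 * k + 2 + 1) (4 * k' + 3) (4 * k' + 4) n rfl (by omega)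
          hn.1 hn.2 h1 h2
        omega
    have hd2 : 0 < upperDensity (Q1ᶜ \ P1) := by
      apply hdens
      intro k
      refine ⟨4 * k + 2, by omega, ?_⟩
      intro n hn
      rw [Set.mem_Ico] at hn
      refine ⟨fun hQ => ?_, fun hP => ?_⟩
      · rw [hQ1def] at hQ
        simp only [Set.mem_iUnion, Set.mem_Ico] at hQ
        obtain ⟨k', h1, h2⟩ := hQ
        have := hbu' (4 * k + 2) (4 * k + 2 + 1) (4 * k' + 3) (4 * k' + 4) n rfl (by omega)
          hn.1 hn.2 h1 h2
        omega
      · rw [hP1def] at hP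
        simp only [Set.mem_iUnion, Set.mem_Ico] at hP
        obtain ⟨k', h1, h2⟩ := hP
        have := hbu' (4 * k + 2) (4 * k + 2 + 1) (4 * k' + 1) (4 * k' + 2) n rfl (by omega)
          hn.1 hn.2 h1 h2
        omega
    have h1 := hcon A1 hA1T hA1inf
    simp only [Set.mem_setOf_eq] at h1
    obtain ⟨-, hR1, -⟩ := h1
    rw [hWP1] at hR1
    have h2 := hcon A2 hA2T hA2inf
    simp only [Set.mem_setOf_eq] at h2
    obtain ⟨-, hR2, -⟩ := h2
    rw [hWQ1] at hR2
    have hu1 := Ruap P1ᶜ Q1 hsub1 hd1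
    have hu2 := Ruap Q1ᶜ P1 hsub2 hd2
    exact hu2.2 (Rtrans _ _ _ (Rtrans _ _ _ hR1 hu1.1) hR2)
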